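/- Let q ≥ 2 and n ≥ 1 be integers, and suppose S = (s_i) is an orientable sequence of order n and even period m over ℤ_q, and that the alternating sign weight w^A_q(S) has additive order h in ℤ_q. Then A^{-1}(S) consists of h shifts of each of q/h mutually o-disjoint orientable sequences of order n+1 and period hm which are alternating sign translates of one another. -/

import Mathlib

namespace OSeq

variable {q : ℕ}

/-- The `n`-tuple (window) of the sequence `s` at position `i`. -/
def window (s : ℤ → ZMod q) (n : ℕ) (i : ℤ) : Fin n → ZMod q :=
  fun k => s (i + (k : ℕ))

/-- The reverse of an `n`-tuple. -/
def tupRev {n : ℕ} (u : Fin n → ZMod q) : Fin n → ZMod q :=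
  fun k => u k.rev

/-- `m` is the (least) period of the periodic sequence `s`. -/
def IsPeriod (s : ℤ → ZMod q) (m : ℕ) : Prop :=
  0 < m ∧ (∀ i : ℤ, s (i + (m : ℤ)) = s i) ∧
    ∀ m' : ℕ, 0 < m' → (∀ i : ℤ, s (i + (m' : ℤ)) = s i) → m ≤ m'

/-- `s` is an `n`-window sequence of period `m`. -/
def IsNWindowSeq (s : ℤ → ZMod q) (n m : ℕ) : Prop :=
  IsPeriod s m ∧ ∀ i j : ℤ, window s n i = window s n j → i ≡ j [ZMOD (m : ℤ)]

/-- `s` is an orientable sequence of order `n` and period `m`. -/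
def IsOS (s : ℤ → ZMod q) (n m : ℕ) : Prop :=
  IsNWindowSeq s n m ∧ ∀ i j : ℤ, window s n i ≠ tupRev (window s n j)

/-- `s` is a negative orientable sequence of order `n` and period `m`. -/
def IsNOS (s : ℤ → ZMod q) (n m : ℕ) : Prop :=
  IsNWindowSeq s n m ∧ ∀ i j : ℤ, window s n i ≠ - tupRev (window s n j)

/-- `s` is a special orientable sequence of order `n` and period `m`:
orientable and also negative orientable. -/
def IsSpecialOS (s : ℤ → ZMod q) (n m : ℕ) : Prop :=
  IsOS s n m ∧ ∀ i j : ℤ, window s n i ≠ - tupRev (window s n j)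

/-- The weight modulo `q` of one period of `s`. -/
def wq (s : ℤ → ZMod q) (m : ℕ) : ZMod q :=
  ∑ i ∈ Finset.range m, s (i : ℤ)

/-- The alternating sign weight modulo `q` of one period of `s`. -/
def wqA (s : ℤ → ZMod q) (m : ℕ) : ZMod q :=
  ∑ i ∈ Finset.range m, (-1 : ZMod q) ^ (m - 1 - i) * s (i : ℤ)

/-- The Lempel homomorphism `D` on sequences. -/
def D (t : ℤ → ZMod q) : ℤ → ZMod q := fun j => t (j + 1) - t j

/-- The homomorphism `A` on sequences. -/
def A (t : ℤ → ZMod q) : ℤ → ZMod q := fun j => t (j + 1) + t j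

/-- Shift of a sequence by `c`. -/
def shift (t : ℤ → ZMod q) (c : ℤ) : ℤ → ZMod q := fun i => t (i + c)

/-- `t'` is a translate of `t`. -/
def IsTranslate (t t' : ℤ → ZMod q) : Prop := ∃ c : ZMod q, ∀ i : ℤ, t' i = t i + c

/-- `t'` is an alternating sign translate of `t`. -/
def IsAltTranslate (t t' : ℤ → ZMod q) : Prop :=
  ∃ c : ZMod q, ∀ i : ℤ, t' i = t i + (if i % 2 = 0 then c else -c)

/-- Two sequences are (`n`-window) disjoint. -/
def WindowDisjoint (n : ℕ) (s t : ℤ → ZMod q) : Prop :=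
  ∀ i j : ℤ, window s n i ≠ window t n j

/-- Orientable-disjoint. -/
def ODisjoint (n : ℕ) (s t : ℤ → ZMod q) : Prop :=
  WindowDisjoint n s t ∧ ∀ i j : ℤ, window s n i ≠ tupRev (window t n j)

/-- Negative orientable-disjoint (no-disjoint). -/
def NODisjoint (n : ℕ) (s t : ℤ → ZMod q) : Prop :=
  WindowDisjoint n s t ∧ ∀ i j : ℤ, window s n i ≠ - tupRev (window t n j)

/-- Special-orientable-disjoint. -/
def SpecialODisjoint (n : ℕ) (s t : ℤ → ZMod q) : Prop :=
  ODisjoint n s t ∧ ∀ i j : ℤ, window s n i ≠ - tupRev (window t n j)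

/-- The string `a^t` appears in `s`. -/
def HasString (s : ℤ → ZMod q) (a : ZMod q) (t : ℕ) : Prop :=
  ∃ j : ℤ, ∀ k : ℕ, k < t → s (j + (k : ℤ)) = a

/-- There is a run `a^t` of `a` in `s` starting at position `j`. -/
def IsRunAt (s : ℤ → ZMod q) (a : ZMod q) (j : ℤ) (t : ℕ) : Prop :=
  (∀ k : ℕ, k < t → s (j + (k : ℤ)) = a) ∧ s (j - 1) ≠ a ∧ s (j + (t : ℤ)) ≠ a

/-- `a^t` is a maximal run of `a` in `s`: the string `a^t` appears and every
string `a^{t'}` appearing in `s` has `t' ≤ t`. -/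
def IsMaxRun (s : ℤ → ZMod q) (a : ZMod q) (t : ℕ) : Prop :=
  HasString s a t ∧ ∀ t' : ℕ, HasString s a t' → t' ≤ t

/-- `k`-th entry of the alternating string `a, -a, a, -a, ...`. -/
def altVal (a : ZMod q) (k : ℕ) : ZMod q := if k % 2 = 0 then a else -a

/-- The signed string `ạ^t` (alternating `a, -a, ...`) appears in `s`. -/
def HasSignedString (s : ℤ → ZMod q) (a : ZMod q) (t : ℕ) : Prop :=
  ∃ j : ℤ, ∀ k : ℕ, k < t → s (j + (k : ℤ)) = altVal a k

/-- There is a signed run `ạ^t` of `a` in `s` starting at position `j`. -/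
def IsSignedRunAt (s : ℤ → ZMod q) (a : ZMod q) (j : ℤ) (t : ℕ) : Prop :=
  (∀ k : ℕ, k < t → s (j + (k : ℤ)) = altVal a k) ∧
    s (j - 1) ≠ -a ∧ s (j + (t : ℤ)) ≠ altVal a t

/-- `ạ^t` is a maximal signed run of `a` in `s`. -/
def IsMaxSignedRun (s : ℤ → ZMod q) (a : ZMod q) (t : ℕ) : Prop :=
  HasSignedString s a t ∧ ∀ t' : ℕ, HasSignedString s a t' → t' ≤ t

/-- The sequence obtained from the ring sequence `[s_0,...,s_{m-1}]` of `s` by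
inserting one extra symbol `a` at ring position `r`, i.e. with ring sequence
`[s_0,...,s_{r-1}, a, s_r, ..., s_{m-1}]` of length `m+1`. -/
def insert1 (s : ℤ → ZMod q) (m r : ℕ) (a : ZMod q) : ℤ → ZMod q :=
  fun j =>
    let j' := (j % ((m : ℤ) + 1)).toNat
    if j' < r then s (j' : ℤ) else if j' = r then a else s ((j' : ℤ) - 1)

/-- The sequence obtained from the ring sequence `[s_0,...,s_{m-1}]` of `s` by
inserting the two symbols `a, -a` at ring position `r`, i.e. with ring sequence
`[s_0,...,s_{r-1}, a, -a, s_r, ..., s_{m-1}]` of length `m+2`. -/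
def insert2 (s : ℤ → ZMod q) (m r : ℕ) (a : ZMod q) : ℤ → ZMod q :=
  fun j =>
    let j' := (j % ((m : ℤ) + 2)).toNat
    if j' < r then s (j' : ℤ)
    else if j' = r then a
    else if j' = r + 1 then -a
    else s ((j' : ℤ) - 2)

/-- The operation `E_a` (with the convention `E_0(S) = S`). -/
def Emod (s : ℤ → ZMod q) (m r : ℕ) (a : ZMod q) : ℤ → ZMod q :=
  if a = 0 then s else insert1 s m r a

/-- A sequence is good (for order `n`) if every run of `0` has length at most `n-2`. -/
def GoodSeq (s : ℤ → ZMod q) (n : ℕ) : Prop :=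
  ∀ t : ℕ, HasString s 0 t → t ≤ n - 2

/-- A tuple is uniform if it is constant. -/
def Uniform {n : ℕ} (u : Fin n → ZMod q) : Prop := ∃ c : ZMod q, ∀ i, u i = c

/-- A tuple is symmetric if it equals its own reverse. -/
def Symm {n : ℕ} (u : Fin n → ZMod q) : Prop := ∀ i : Fin n, u i = u i.rev

/-- An `n`-tuple is `m`-symmetric (`m ≤ n`) if `u_i = u_{m-1-i}` for `0 ≤ i ≤ m-1`. -/
def MSymm {n : ℕ} (u : Fin n → ZMod q) (m : ℕ) (hm : m ≤ n) : Prop :=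
  ∀ i : Fin m, u (Fin.castLE hm i) = u (Fin.castLE hm i.rev)

/-- An `n`-tuple (`n ≥ 2`) is alternating. -/
def Alternating {n : ℕ} (hn : 2 ≤ n) (u : Fin n → ZMod q) : Prop :=
  u ⟨0, by omega⟩ ≠ u ⟨1, by omega⟩ ∧
    ∀ i : Fin n, u i = if (i : ℕ) % 2 = 0 then u ⟨0, by omega⟩ else u ⟨1, by omega⟩

/-- `L_n(v)`: the set of `n`-tuples whose first `n-r` entries agree with the
`(n-r)`-tuple `v`. -/
def Lset (n r : ℕ) (v : Fin (n - r) → ZMod q) : Set (Fin n → ZMod q) :=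
  {u | ∀ i : Fin (n - r), u (Fin.castLE (Nat.sub_le n r) i) = v i}

/-- The `n`-tuple `u` appears in the sequence `s`. -/
def AppearsIn (s : ℤ → ZMod q) (n : ℕ) (u : Fin n → ZMod q) : Prop :=
  ∃ i : ℤ, window s n i = u

end OSeq

namespace OSeqAux

open OSeq

variable {q : ℕ}

/-- alternating sign -/
def ep (q : ℕ) : ℤ → ZMod q := fun j => if j % 2 = 0 then (1 : ZMod q) else -1

lemma ep_succ (j : ℤ) : ep q (j + 1) = - ep q j := by
  unfold ep
  rcases Int.emod_two_eq j with h | h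
  · have h2 : (j + 1) % 2 = 1 := by omega
    simp [h, h2]
  · have h2 : (j + 1) % 2 = 0 := by omega
    simp [h, h2]

lemma ep_even (j c : ℤ) (hc : c % 2 = 0) : ep q (j + c) = ep q j := by
  unfold ep
  have : (j + c) % 2 = j % 2 := by omega
  rw [this]

lemma ep_mul_self (j : ℤ) : ep q j * ep q j = 1 := by
  unfold ep; split <;> ring

lemma ep_zero : ep q 0 = 1 := by simp [ep]

def fseq (s : ℤ → ZMod q) : ℕ → ZMod q
  | 0 => 0
  | (k+1) => s k - fseq s k

def bseq (s : ℤ → ZMod q) : ℕ → ZMod q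
  | 0 => 0
  | (k+1) => s (-(k : ℤ) - 1) - bseq s k

def tzero (s : ℤ → ZMod q) : ℤ → ZMod q := fun j =>
  if 0 ≤ j then fseq s j.toNat else bseq s (-j).toNat

lemma tzero_zero (s : ℤ → ZMod q) : tzero s 0 = 0 := by simp [tzero, fseq]

lemma tzero_rec (s : ℤ → ZMod q) (j : ℤ) : tzero s (j + 1) = s j - tzero s j := by
  unfold tzero
  rcases le_or_gt 0 j with hj | hj
  · have h1 : (0:ℤ) ≤ j + 1 := by omega
    have h2 : (j + 1).toNat = j.toNat + 1 := by omega
    rw [if_pos h1, if_pos hj, h2, fseq]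
    congr 2
    omega
  · rcases eq_or_lt_of_le (by omega : j ≤ -1) with he | hl
    · subst_vars
      norm_num [fseq]
      show (0 : ZMod q) = s (-1) - bseq s 1
      simp [bseq, fseq]
    · have h1 : ¬ (0:ℤ) ≤ j + 1 := by omega
      have h2 : ¬ (0:ℤ) ≤ j := by omega
      rw [if_neg h1, if_neg h2]
      have h3 : (-j).toNat = (-(j+1)).toNat + 1 := by omega
      rw [h3, bseq]
      have h4 : (-((-(j+1)).toNat : ℤ) - 1) = j := by omega
      rw [h4]
      ring

lemma tzero_A (s : ℤ → ZMod q) (j : ℤ) : tzero s (j + 1) + tzero s j = s j := by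
  rw [tzero_rec]; ring

lemma fseq_eq (s : ℤ → ZMod q) (k : ℕ) :
    fseq s k = ∑ i ∈ Finset.range k, (-1 : ZMod q) ^ (k - 1 - i) * s (i : ℤ) := by
  induction k with
  | zero => simp [fseq]
  | succ k ih =>
      rw [fseq, ih, Finset.sum_range_succ]
      have h1 : ∀ i ∈ Finset.range k,
          (-1 : ZMod q) ^ (k + 1 - 1 - i) * s (i : ℤ)
            = -((-1 : ZMod q) ^ (k - 1 - i) * s (i : ℤ)) := by
        intro i hi
        have hi' : i < k := Finset.mem_range.mp hi
        have : k + 1 - 1 - i = (k - 1 - i) + 1 := by omega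
        rw [this, pow_succ]
        ring
      rw [Finset.sum_congr rfl h1, Finset.sum_neg_distrib]
      have : k + 1 - 1 - k = 0 := by omega
      rw [this]
      ring

lemma fseq_wqA (s : ℤ → ZMod q) (m : ℕ) : fseq s m = wqA s m := by
  rw [fseq_eq]; rfl

variable {q : ℕ}

-- integer-multiple periodicity
lemma per_int {s : ℤ → ZMod q} {m : ℕ} (hper : ∀ i : ℤ, s (i + (m : ℤ)) = s i)
    (a : ℤ) (i : ℤ) : s (i + a * m) = s i := by
  induction a using Int.induction_on with
  | zero => simp
  | succ a ih =>
      have := hper (i + a * m)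
      have he : i + (a + 1 : ℤ) * m = (i + a * m) + m := by ring
      rw [he, this, ih]
  | pred a ih =>
      have := hper (i + (-(a:ℤ) - 1) * m)
      have he : i + (-(a:ℤ)) * m = (i + (-(a:ℤ) - 1) * m) + m := by ring
      rw [he] at ih
      rw [this] at ih
      exact ih

-- least period divides any period
lemma least_period_dvd {s : ℤ → ZMod q} {m : ℕ}
    (hm : 0 < m) (hper : ∀ i : ℤ, s (i + (m : ℤ)) = s i)
    (hmin : ∀ m' : ℕ, 0 < m' → (∀ i : ℤ, s (i + (m' : ℤ)) = s i) → m ≤ m')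
    {p : ℕ} (hp : 0 < p) (hpper : ∀ i : ℤ, s (i + (p : ℤ)) = s i) : m ∣ p := by
  by_contra hnd
  set r := p % m with hr
  have hr0 : 0 < r := by
    rcases Nat.eq_zero_or_pos r with h0 | h0
    · exact absurd (Nat.dvd_of_mod_eq_zero h0) hnd
    · exact h0
  have hrm : r < m := Nat.mod_lt _ hm
  have hrper : ∀ i : ℤ, s (i + (r : ℤ)) = s i := by
    intro i
    have key : (r : ℤ) = (p : ℤ) + (-(p / m : ℕ) : ℤ) * m := by
      have h := Nat.mod_add_div p m
      have h2 : (r : ℤ) + m * (p / m : ℕ) = p := by exact_mod_cast congrArg (Nat.cast : ℕ → ℤ) h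
      linear_combination h2
    rw [key, ← add_assoc, per_int hper, hpper]
  exact absurd (hmin r hr0 hrper) (by omega)


lemma mul_emod_two_eq_zero (a m : ℤ) (h : m % 2 = 0) : (a * m) % 2 = 0 := by
  rw [Int.mul_emod, h, mul_zero]
  rfl

open OSeq in
lemma tzero_shift {s : ℤ → ZMod q} {m : ℕ} (hm : 0 < m) (hme : Even m)
    (hper : ∀ i : ℤ, s (i + (m : ℤ)) = s i) (j : ℤ) :
    tzero s (j + m) = tzero s j + ep q j * wqA s m := by
  induction j using Int.induction_on with
  | zero =>
      simp only [tzero_zero, ep_zero, zero_add, one_mul]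
      have h0 : (0:ℤ) ≤ (m:ℤ) := by positivity
      have h1 : tzero s (m : ℤ) = fseq s m := by
        unfold tzero; rw [if_pos h0]; simp
      rw [h1, fseq_wqA]
  | succ j ih =>
      have h1 : (j:ℤ) + 1 + m = (j + m) + 1 := by ring
      rw [h1, tzero_rec, ih, tzero_rec, ep_succ]
      have hsm : s ((j:ℤ) + m) = s j := hper j
      rw [hsm]; ring
  | pred j ih =>
      have h1 : (-(j:ℤ) - 1) + m + 1 = -(j:ℤ) + m := by ring
      have h2 := tzero_rec s ((-(j:ℤ) - 1) + m)
      rw [h1, ih] at h2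
      have h3 := tzero_rec s (-(j:ℤ) - 1)
      have h4 : (-(j:ℤ) - 1) + 1 = -(j:ℤ) := by ring
      rw [h4] at h3
      have hsm : s ((-(j:ℤ) - 1) + m) = s (-(j:ℤ) - 1) := hper _
      have hep : ep q (-(j:ℤ)) = - ep q (-(j:ℤ) - 1) := by
        have := ep_succ (q := q) (-(j:ℤ) - 1); rw [h4] at this; exact this
      rw [hsm, h3, hep] at h2
      -- h2 : s(-j-1) - tzero(-j-1) = tzero(-j-1+m) + (- ep(-j-1)) * wqA
      -- want: tzero(-j-1+m) = tzero(-j-1) + ep(-j-1) * wqA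
      linear_combination h2

open OSeq in
lemma tzero_shift_mul {s : ℤ → ZMod q} {m : ℕ} (hm : 0 < m) (hme : Even m)
    (hper : ∀ i : ℤ, s (i + (m : ℤ)) = s i) (a : ℤ) (j : ℤ) :
    tzero s (j + a * m) = tzero s j + ep q j * ((a : ZMod q) * wqA s m) := by
  have hm2 : (m:ℤ) % 2 = 0 := by
    obtain ⟨c, hc⟩ := hme; omega
  induction a using Int.induction_on with
  | zero => simp
  | succ a ih =>
      have h1 : j + ((a:ℤ) + 1) * m = (j + a * m) + m := by ring
      rw [h1, tzero_shift hm hme hper, ih]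
      have hep : ep q (j + a * m) = ep q j := ep_even _ _ (mul_emod_two_eq_zero _ _ hm2)
      rw [hep]
      push_cast
      ring
  | pred a ih =>
      have h1 : j + (-(a:ℤ)) * m = (j + (-(a:ℤ) - 1) * m) + m := by ring
      rw [h1, tzero_shift hm hme hper] at ih
      have hep : ep q (j + (-(a:ℤ) - 1) * m) = ep q j := ep_even _ _ (mul_emod_two_eq_zero _ _ hm2)
      rw [hep] at ih
      push_cast at ih ⊢
      linear_combination ih


open OSeq

def Fam (s : ℤ → ZMod q) (c : ZMod q) : ℤ → ZMod q := fun j => tzero s j + ep q j * c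

lemma A_Fam (s : ℤ → ZMod q) (c : ZMod q) : A (Fam s c) = s := by
  funext j
  show (tzero s (j+1) + ep q (j+1) * c) + (tzero s j + ep q j * c) = s j
  rw [ep_succ, tzero_rec]; ring

lemma Fam_shift_mul {s : ℤ → ZMod q} {m : ℕ} (hm : 0 < m) (hme : Even m)
    (hper : ∀ i : ℤ, s (i + (m : ℤ)) = s i) (c : ZMod q) (a j : ℤ) :
    Fam s c (j + a * m) = Fam s c j + ep q j * ((a : ZMod q) * wqA s m) := by
  have hm2 : (m:ℤ) % 2 = 0 := by obtain ⟨d, hd⟩ := hme; omega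
  unfold Fam
  rw [tzero_shift_mul hm hme hper, ep_even j (a*(m:ℤ)) (mul_emod_two_eq_zero _ _ hm2)]
  ring

lemma window_comp {s : ℤ → ZMod q} {n : ℕ} {i : ℤ} (k : Fin n) :
    window s n i k = s (i + (k.val : ℤ)) := rfl

lemma A_eval {s t : ℤ → ZMod q} (ht : A t = s) (x : ℤ) : s x = t (x + 1) + t x :=
  (congrFun ht x).symm

lemma windowA {s t t' : ℤ → ZMod q} {n : ℕ} (ht : A t = s) (ht' : A t' = s)
    {i j : ℤ} (H : window t (n+1) i = window t' (n+1) j) :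
    window s n i = window s n j := by
  funext k
  have h1 := congrFun H ⟨k.val, by omega⟩
  have h2 := congrFun H ⟨k.val + 1, by omega⟩
  rw [window_comp, window_comp] at h1 h2
  rw [window_comp, window_comp, A_eval ht, A_eval ht']
  simp only [Fin.val_mk] at h1 h2 ⊢
  have e1 : i + ((k.val + 1 : ℕ) : ℤ) = i + (k.val : ℤ) + 1 := by push_cast; ring
  have e2 : j + ((k.val + 1 : ℕ) : ℤ) = j + (k.val : ℤ) + 1 := by push_cast; ring
  rw [e1, e2] at h2
  rw [h1, h2]

lemma windowA_rev {s t t' : ℤ → ZMod q} {n : ℕ} (ht : A t = s) (ht' : A t' = s)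
    {i j : ℤ} (H : window t (n+1) i = tupRev (window t' (n+1) j)) :
    window s n i = tupRev (window s n j) := by
  funext k
  have comp : ∀ v : ℕ, (hv : v < n+1) →
      t (i + (v : ℤ)) = t' (j + ((n - v : ℕ) : ℤ)) := by
    intro v hv
    have h := congrFun H ⟨v, hv⟩
    rw [window_comp] at h
    rw [h]
    show tupRev (window t' (n+1) j) ⟨v, hv⟩ = _
    unfold tupRev
    rw [window_comp]
    congr 2
    have : ((⟨v, hv⟩ : Fin (n+1)).rev : ℕ) = n - v := by
      rw [Fin.val_rev]
      simp
    rw [this]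
  have hk := k.isLt
  have c1 := comp k.val (by omega)
  have c2 := comp (k.val + 1) (by omega)
  rw [window_comp, A_eval ht]
  show _ = window s n j (k.rev)
  rw [window_comp, A_eval ht']
  have hkrev : (k.rev : ℕ) = n - 1 - k.val := by
    rw [Fin.val_rev]
    omega
  rw [hkrev]
  have e1 : i + (k.val : ℤ) + 1 = i + ((k.val + 1 : ℕ) : ℤ) := by push_cast; ring
  rw [e1, c1, c2]
  have e2 : j + ((n - (k.val + 1) : ℕ) : ℤ) = j + ((n - 1 - k.val : ℕ) : ℤ) := by omega
  have e3 : j + ((n - k.val : ℕ) : ℤ) = j + ((n - 1 - k.val : ℕ) : ℤ) + 1 := by omega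
  rw [e2, e3]
  ring


section Coset
variable {q : ℕ} [NeZero q]

lemma ord_dvd (w : ZMod q) : addOrderOf w ∣ q := by
  simpa [ZMod.card] using addOrderOf_dvd_card (x := w)

lemma qh_pos (w : ZMod q) : 0 < q / addOrderOf w :=
  Nat.div_pos (Nat.le_of_dvd (NeZero.pos q) (ord_dvd w)) (addOrderOf_pos w)

lemma qh_dvd (w : ZMod q) : q / addOrderOf w ∣ q :=
  Nat.div_dvd_of_dvd (ord_dvd w)

lemma ord_mul_w (w : ZMod q) : ((addOrderOf w : ℕ) : ZMod q) * w = 0 := by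
  have := addOrderOf_nsmul_eq_zero w
  rwa [nsmul_eq_mul] at this

lemma cast_w_zero (w : ZMod q) :
    ZMod.castHom (qh_dvd w) (ZMod (q / addOrderOf w)) w = 0 := by
  haveI : NeZero (q / addOrderOf w) := ⟨(qh_pos w).ne'⟩
  have hpos : 0 < addOrderOf w := addOrderOf_pos w
  have hwv : ((w.val : ℕ) : ZMod q) = w := by
    rw [ZMod.natCast_val, ZMod.cast_id]
  have hq : q ∣ addOrderOf w * w.val := by
    rw [← ZMod.natCast_eq_zero_iff]
    push_cast
    rw [hwv]
    exact ord_mul_w w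
  have hq' : addOrderOf w * (q / addOrderOf w) ∣ addOrderOf w * w.val := by
    rwa [Nat.mul_div_cancel' (ord_dvd w)]
  have hdv : (q / addOrderOf w) ∣ w.val := (Nat.mul_dvd_mul_iff_left hpos).mp hq'
  rw [ZMod.castHom_apply, ← ZMod.natCast_val, ZMod.natCast_eq_zero_iff]
  exact hdv

lemma rep_inj (w : ZMod q) {k k' : ℕ} (hk : k < q / addOrderOf w)
    (hk' : k' < q / addOrderOf w) (a : ℤ)
    (he : (k : ZMod q) = (k' : ZMod q) + (a : ZMod q) * w) : k = k' := by
  haveI : NeZero (q / addOrderOf w) := ⟨(qh_pos w).ne'⟩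
  have := congrArg (ZMod.castHom (qh_dvd w) (ZMod (q / addOrderOf w))) he
  rw [map_add, map_mul, map_natCast, map_natCast, map_intCast, cast_w_zero, mul_zero,
    add_zero] at this
  have h1 : ((k : ℕ) : ZMod (q / addOrderOf w)).val = k := ZMod.val_cast_of_lt hk
  have h2 : ((k' : ℕ) : ZMod (q / addOrderOf w)).val = k' := ZMod.val_cast_of_lt hk'
  rw [← h1, ← h2, this]

lemma int_w_dvd (w : ZMod q) {a : ℤ} (ha : (a : ZMod q) * w = 0) :
    (addOrderOf w : ℤ) ∣ a := by
  have hpos : 0 < addOrderOf w := addOrderOf_pos w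
  have hposz : (0:ℤ) < (addOrderOf w : ℤ) := by exact_mod_cast hpos
  set X : ZMod q := (((a / (addOrderOf w : ℤ)) : ℤ) : ZMod q) with hX
  have hr0 : 0 ≤ a % (addOrderOf w : ℤ) := Int.emod_nonneg a hposz.ne'
  have hr1 : a % (addOrderOf w : ℤ) < (addOrderOf w : ℤ) := Int.emod_lt_of_pos a hposz
  have hae : a = (addOrderOf w : ℤ) * (a / (addOrderOf w : ℤ))
      + (((a % (addOrderOf w : ℤ)).toNat : ℕ) : ℤ) := by
    have := Int.mul_ediv_add_emod a (addOrderOf w : ℤ)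
    omega
  have key : ((a : ℤ) : ZMod q) = ((addOrderOf w : ℕ) : ZMod q) * X
      + (((a % (addOrderOf w : ℤ)).toNat : ℕ) : ZMod q) := by
    conv_lhs => rw [hae]
    push_cast
    ring
  have hrz : (((a % (addOrderOf w : ℤ)).toNat : ℕ) : ZMod q) * w = 0 := by
    have h2 : (((a % (addOrderOf w : ℤ)).toNat : ℕ) : ZMod q)
        = (a : ZMod q) - ((addOrderOf w : ℕ) : ZMod q) * X := by
      rw [key]; ring
    rw [h2, sub_mul, ha, mul_right_comm, ord_mul_w, zero_mul, zero_sub, neg_zero]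
  have hsm : ((a % (addOrderOf w : ℤ)).toNat) • w = 0 := by rwa [nsmul_eq_mul]
  have hdvd : addOrderOf w ∣ (a % (addOrderOf w : ℤ)).toNat :=
    addOrderOf_dvd_iff_nsmul_eq_zero.mpr hsm
  have hzero : (a % (addOrderOf w : ℤ)).toNat = 0 :=
    Nat.eq_zero_of_dvd_of_lt hdvd (by omega)
  exact ⟨a / (addOrderOf w : ℤ), by omega⟩

lemma nat_w_inj (w : ZMod q) {α α' : ℕ} (hα : α < addOrderOf w) (hα' : α' < addOrderOf w)
    (he : (α : ZMod q) * w = (α' : ZMod q) * w) : α = α' := by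
  have h : (((α : ℤ) - (α' : ℤ) : ℤ) : ZMod q) * w = 0 := by
    push_cast
    rw [sub_mul, he, sub_self]
  have := int_w_dvd w h
  obtain ⟨c, hc⟩ := this
  have hposz : (0:ℤ) < (addOrderOf w : ℤ) := by exact_mod_cast addOrderOf_pos w
  have hb1 : -(addOrderOf w : ℤ) < (α : ℤ) - (α' : ℤ) := by omega
  have hb2 : (α : ℤ) - (α' : ℤ) < addOrderOf w := by omega
  rcases lt_trichotomy c 0 with h0 | h0 | h0
  · exfalso
    nlinarith [hc, hb1, mul_le_mul_of_nonneg_left (show c ≤ -1 by omega) hposz.le]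
  · subst h0
    rw [mul_zero] at hc
    omega
  · exfalso
    nlinarith [hc, hb2, mul_le_mul_of_nonneg_left (show (1:ℤ) ≤ c by omega) hposz.le]
end Coset

section Phi
variable {q : ℕ} [NeZero q]

def Phi (w : ZMod q) (p : Fin (q / addOrderOf w) × Fin (addOrderOf w)) : ZMod q :=
  ((p.1 : ℕ) : ZMod q) + ((p.2 : ℕ) : ZMod q) * w

lemma Phi_inj (w : ZMod q) : Function.Injective (Phi w) := by
  rintro ⟨k, α⟩ ⟨k', α'⟩ he
  simp only [Phi] at he
  have hk : (k : ℕ) = (k' : ℕ) := by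
    refine rep_inj w k.isLt k'.isLt ((α' : ℤ) - (α : ℤ)) ?_
    push_cast
    linear_combination he
  have hcast : ((k : ℕ) : ZMod q) = ((k' : ℕ) : ZMod q) := by rw [hk]
  have hα : ((α : ℕ) : ZMod q) * w = ((α' : ℕ) : ZMod q) * w := by
    have := he
    rw [hcast] at this
    exact add_left_cancel this
  have : (α : ℕ) = (α' : ℕ) := nat_w_inj w α.isLt α'.isLt hα
  exact Prod.ext (Fin.ext hk) (Fin.ext this)

lemma Phi_surj (w : ZMod q) : Function.Surjective (Phi w) := by
  have hbij : Function.Bijective (Phi w) := by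
    rw [Fintype.bijective_iff_injective_and_card]
    refine ⟨Phi_inj w, ?_⟩
    simp [ZMod.card, Nat.div_mul_cancel (ord_dvd w)]
  exact hbij.2

end Phi

end OSeqAux

open OSeq OSeqAux
/-- If `S` is an orientable sequence of order `n` and even period `m` over `ℤ_q`
and the alternating sign weight `w^A_q(S)` has additive order `h` in `ℤ_q`, then
`A⁻¹(S)` consists of `h` shifts of each of `q/h` mutually o-disjoint orientable
sequences of order `n+1` and period `hm` which are alternating sign translates
of one another. -/
theorem Ainv_of_orientable_even_period {q n m h : ℕ} (hq : 2 ≤ q) (hn : 1 ≤ n)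
    (s : ℤ → ZMod q) (hS : IsOS s n m) (hm : Even m)
    (hh : addOrderOf (wqA s m) = h) :
    ∃ F : Fin (q / h) → ℤ → ZMod q,
      (∀ k, A (F k) = s ∧ IsOS (F k) (n + 1) (h * m)) ∧
      (∀ k k', k ≠ k' → ODisjoint (n + 1) (F k) (F k')) ∧
      (∀ k k', IsAltTranslate (F k) (F k')) ∧
      (∀ t : ℤ → ZMod q, A t = s ↔
        ∃ (k : Fin (q / h)) (α : Fin h), t = shift (F k) ((α : ℕ) * (m : ℤ))) ∧
      Function.Injective
        (fun p : Fin (q / h) × Fin h => shift (F p.1) ((p.2 : ℕ) * (m : ℤ))) := by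
  haveI : NeZero q := ⟨by omega⟩
  subst hh
  obtain ⟨⟨⟨hm0, hper, hmin⟩, hwin⟩, hrev⟩ := hS
  set w : ZMod q := wqA s m with hw
  set F : Fin (q / addOrderOf w) → ℤ → ZMod q :=
    fun k => Fam s ((k : ℕ) : ZMod q) with hF
  have hA : ∀ k, A (F k) = s := fun k => A_Fam s _
  have shiftF : ∀ (c : ZMod q) (a j : ℤ),
      Fam s c (j + a * m) = Fam s c j + ep q j * ((a : ZMod q) * w) :=
    fun c a j => Fam_shift_mul hm0 hm hper c a j
  have hFam0 : ∀ c : ZMod q, Fam s c 0 = c := by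
    intro c
    show tzero s 0 + ep q 0 * c = c
    rw [tzero_zero, ep_zero]; ring
  -- key cancellation: Fam s c j = Fam s c' j + ep q j * x  →  c = c' + x
  have cancel : ∀ (c c' x : ZMod q) (j : ℤ),
      Fam s c j = Fam s c' j + ep q j * x → c = c' + ep q j * ep q j * x := by
    intro c c' x j hj
    have : ep q j * c = ep q j * c' + ep q j * x := by
      have : tzero s j + ep q j * c = tzero s j + ep q j * c' + ep q j * x := hj
      linear_combination this
    calc c = ep q j * ep q j * c := by rw [ep_mul_self]; ring
    _ = ep q j * (ep q j * c' + ep q j * x) := by rw [← this]; ring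
    _ = ep q j * ep q j * c' + ep q j * ep q j * x := by ring
    _ = c' + ep q j * ep q j * x := by rw [ep_mul_self]; ring
  -- windows of F k determine positions mod m, and the residual multiple
  have window_step : ∀ (c c' : ZMod q) (i j : ℤ),
      window (Fam s c) (n+1) i = window (Fam s c') (n+1) j →
      ∃ a : ℤ, j = i + a * m ∧ c = c' + (a : ZMod q) * w := by
    intro c c' i j H
    have hws : window s n i = window s n j := windowA (A_Fam s c) (A_Fam s c') H
    have hmod : i ≡ j [ZMOD (m : ℤ)] := hwin i j hws
    obtain ⟨a, ha⟩ : (m : ℤ) ∣ j - i := Int.ModEq.dvd hmod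
    refine ⟨a, by linear_combination ha, ?_⟩
    have h0 := congrFun H ⟨0, by omega⟩
    rw [window_comp, window_comp] at h0
    simp only [Fin.val_mk, Nat.cast_zero, add_zero] at h0
    have hj : j = i + a * m := by linear_combination ha
    rw [hj, shiftF c' a i] at h0
    have := cancel c c' ((a : ZMod q) * w) i (by linear_combination h0)
    rwa [ep_mul_self, one_mul] at this
  refine ⟨F, ?_, ?_, ?_, ?_, ?_⟩
  · -- A (F k) = s and IsOS (F k) (n+1) (h*m)
    intro k
    refine ⟨hA k, ⟨⟨?_, ?_, ?_⟩, ?_⟩, ?_⟩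
    · exact Nat.mul_pos (addOrderOf_pos w) hm0
    · -- periodicity with h*m
      intro i
      have : (i : ℤ) + ((addOrderOf w * m : ℕ) : ℤ) = i + (addOrderOf w : ℤ) * m := by
        push_cast; ring
      rw [this]
      show Fam s _ _ = Fam s _ _
      rw [shiftF _ ((addOrderOf w : ℤ)) i]
      have : (((addOrderOf w : ℤ)) : ZMod q) * w = 0 := by
        push_cast
        exact ord_mul_w w
      rw [this, mul_zero, add_zero]
    · -- minimality
      intro m' hm' hper'
      have hs' : ∀ i : ℤ, s (i + (m' : ℤ)) = s i := by
        intro i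
        have e1 := A_eval (hA k) (i + (m' : ℤ))
        have e2 := A_eval (hA k) i
        rw [e1, e2]
        have g1 : (i : ℤ) + (m' : ℤ) + 1 = (i + 1) + (m' : ℤ) := by ring
        rw [g1, hper' (i+1), hper' i]
      have hdvd : m ∣ m' := least_period_dvd hm0 hper hmin hm' hs'
      obtain ⟨b, hb⟩ := hdvd
      have hbpos : 0 < b := by
        rcases Nat.eq_zero_or_pos b with h0 | h0
        · subst h0
          rw [Nat.mul_zero] at hb
          omega
        · exact h0
      have hb0 := hper' 0
      rw [show (0 : ℤ) + (m' : ℤ) = (0 : ℤ) + (b : ℤ) * m by rw [hb]; push_cast; ring] at hb0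
      have : Fam s ((k : ℕ) : ZMod q) (0 + (b:ℤ) * m) = Fam s ((k : ℕ) : ZMod q) 0 :=
        hb0
      rw [shiftF _ ((b : ℤ)) 0] at this
      have hbw : (((b : ℤ)) : ZMod q) * w = 0 := by
        have h1 : ep q 0 * ((((b : ℤ)) : ZMod q) * w) = 0 := by
          linear_combination this
        rwa [ep_zero, one_mul] at h1
      have hbw' : b • w = 0 := by
        rw [nsmul_eq_mul]
        exact_mod_cast hbw
      have hhb : addOrderOf w ∣ b := addOrderOf_dvd_iff_nsmul_eq_zero.mpr hbw'
      have : addOrderOf w ≤ b := Nat.le_of_dvd hbpos hhb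
      calc addOrderOf w * m ≤ b * m := Nat.mul_le_mul_right m this
      _ = m' := by rw [hb, Nat.mul_comm]
    · -- window property
      intro i j H
      obtain ⟨a, hj, hc⟩ := window_step _ _ i j H
      have hx : ((a : ℤ) : ZMod q) * w = 0 := by linear_combination -hc
      have hdvd : ((addOrderOf w : ℕ) : ℤ) ∣ a := int_w_dvd w hx
      have : ((addOrderOf w * m : ℕ) : ℤ) ∣ j - i := by
        obtain ⟨e, he⟩ := hdvd
        refine ⟨e, ?_⟩
        push_cast
        rw [hj, he]
        ring
      exact Int.modEq_iff_dvd.mpr this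
    · -- no reversed windows
      intro i j H
      exact hrev i j (windowA_rev (hA k) (hA k) H)
  · -- o-disjointness
    intro k k' hkk
    constructor
    · intro i j H
      obtain ⟨a, hj, hc⟩ := window_step _ _ i j H
      exact hkk (Fin.ext (rep_inj w k.isLt k'.isLt a hc))
    · intro i j H
      exact hrev i j (windowA_rev (hA k) (hA k') H)
  · -- alternating sign translates
    intro k k'
    refine ⟨((k' : ℕ) : ZMod q) - ((k : ℕ) : ZMod q), fun i => ?_⟩
    show Fam s _ i = Fam s _ i + _
    unfold Fam ep
    split <;> ring
  · -- characterization of A⁻¹(s)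
    intro t
    constructor
    · intro ht
      have htr : ∀ j : ℤ, t (j + 1) = s j - t j := by
        intro j
        have := congrFun ht j
        simp only [A] at this
        linear_combination this
      have hform : ∀ j : ℤ, t j = tzero s j + ep q j * t 0 := by
        intro j
        induction j using Int.induction_on with
        | zero => rw [tzero_zero, ep_zero]; ring
        | succ j ih =>
            rw [htr j, ih, tzero_rec, ep_succ]
            ring
        | pred j ih =>
            have h1 := htr (-(j:ℤ) - 1)
            have h4 : (-(j:ℤ) - 1) + 1 = -(j:ℤ) := by ring
            rw [h4, ih] at h1
            have h2 := tzero_rec s (-(j:ℤ) - 1)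
            rw [h4] at h2
            have h3 := ep_succ (q := q) (-(j:ℤ) - 1)
            rw [h4] at h3
            -- h1 : tzero(-j) + ep(-j) t0 = s(-j-1) - t(-j-1)
            -- h2 : tzero(-j) = s(-j-1) - tzero(-j-1)
            -- h3 : ep(-j) = - ep(-j-1)
            rw [h2, h3] at h1
            linear_combination h1
      obtain ⟨⟨k, α⟩, hkα⟩ := Phi_surj w (t 0)
      refine ⟨k, α, ?_⟩
      funext j
      show t j = F k (j + (α : ℕ) * (m : ℤ))
      have e1 : (j : ℤ) + (α : ℕ) * (m : ℤ) = j + ((α : ℕ) : ℤ) * m := by push_cast; ring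
      rw [e1]
      show t j = Fam s ((k : ℕ) : ZMod q) (j + ((α : ℕ) : ℤ) * m)
      rw [shiftF _ (((α : ℕ) : ℤ)) j, hform j]
      have e2 : ((((α : ℕ) : ℤ)) : ZMod q) = ((α : ℕ) : ZMod q) := by push_cast; ring
      rw [e2]
      have : t 0 = ((k : ℕ) : ZMod q) + ((α : ℕ) : ZMod q) * w := hkα.symm
      rw [this]
      show tzero s j + ep q j * _ = (tzero s j + ep q j * _) + _
      ring
    · rintro ⟨k, α, rfl⟩
      funext j
      show shift (F k) _ (j + 1) + shift (F k) _ j = s j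
      show F k (j + 1 + ((α:ℕ) * (m:ℤ))) + F k (j + ((α:ℕ) * (m:ℤ))) = s j
      have e1 : (j : ℤ) + 1 + ((α:ℕ) * (m:ℤ)) = (j + ((α:ℕ):ℤ) * m) + 1 := by push_cast; ring
      have e2 : (j : ℤ) + ((α:ℕ) * (m:ℤ)) = j + ((α:ℕ):ℤ) * m := by push_cast; ring
      rw [e1, e2]
      have := A_eval (hA k) (j + ((α:ℕ):ℤ) * m)
      rw [← this]
      exact per_int hper ((α:ℕ):ℤ) j
  · -- injectivity
    rintro ⟨k, α⟩ ⟨k', α'⟩ he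
    have h0 := congrFun he 0
    simp only [shift] at h0
    have e1 : (0 : ℤ) + (α : ℕ) * (m : ℤ) = 0 + ((α:ℕ):ℤ) * m := by push_cast; ring
    have e2 : (0 : ℤ) + (α' : ℕ) * (m : ℤ) = 0 + ((α':ℕ):ℤ) * m := by push_cast; ring
    rw [e1, e2] at h0
    show (⟨k, α⟩ : Fin (q / addOrderOf w) × Fin (addOrderOf w)) = ⟨k', α'⟩
    apply Phi_inj w
    show ((k : ℕ) : ZMod q) + ((α : ℕ) : ZMod q) * w
       = ((k' : ℕ) : ZMod q) + ((α' : ℕ) : ZMod q) * w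
    have g1 : F k (0 + ((α:ℕ):ℤ) * m) = ((k : ℕ) : ZMod q) + ((α : ℕ) : ZMod q) * w := by
      show Fam s _ _ = _
      rw [shiftF _ (((α:ℕ):ℤ)) 0, hFam0, ep_zero]
      push_cast
      ring
    have g2 : F k' (0 + ((α':ℕ):ℤ) * m) = ((k' : ℕ) : ZMod q) + ((α' : ℕ) : ZMod q) * w := by
      show Fam s _ _ = _
      rw [shiftF _ (((α':ℕ):ℤ)) 0, hFam0, ep_zero]
      push_cast
      ring
    rw [← g1, ← g2, h0]
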